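/- arXiv:1409.8624 — 4 statements merged into one kernel-verified Lean document; each statement's English description precedes it below -/
import Mathlib

section
/- Let C and Λ be Hermitian positive semidefinite n×n complex matrices with CΛ = 0, and let Z_D be Hermitian positive definite. Define Z = (Z_D⁻¹ + Λ)⁻¹. Then (C + Z)Z⁻¹ = (C + Z_D)Z_D⁻¹, and consequently det(C + Z_D)/det(Z_D) = det(C + Z)/det(Z). -/
open Matrix ComplexOrder

theorem enhanced_noise_det_ratio
    {n : ℕ} (C Λ ZD : Matrix (Fin n) (Fin n) ℂ)
    (hC : C.PosSemidef) (hΛ : Λ.PosSemidef) (hCΛ : C * Λ = 0)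
    (hZD : ZD.PosDef) (Z : Matrix (Fin n) (Fin n) ℂ)
    (hZ : Z = (ZD⁻¹ + Λ)⁻¹) :
    (C + Z) * Z⁻¹ = (C + ZD) * ZD⁻¹ ∧
      (C + ZD).det / ZD.det = (C + Z).det / Z.det := by
  have hW : (ZD⁻¹ + Λ).PosDef := (hZD.inv).add_posSemidef hΛ
  have hZpd : Z.PosDef := hZ ▸ hW.inv
  have hZiv : Z⁻¹ = ZD⁻¹ + Λ := by
    rw [hZ, Matrix.nonsing_inv_nonsing_inv _ (isUnit_iff_isUnit_det _ |>.1 hW.isUnit)]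
  have h1 : (C + Z) * Z⁻¹ = (C + ZD) * ZD⁻¹ := by
    rw [hZiv, add_mul, add_mul, mul_add, hCΛ, add_zero, ← hZiv,
      Matrix.mul_nonsing_inv _ (isUnit_iff_isUnit_det _ |>.1 hZpd.isUnit),
      Matrix.mul_nonsing_inv _ (isUnit_iff_isUnit_det _ |>.1 hZD.isUnit)]
  refine ⟨h1, ?_⟩
  have hd : (C + Z).det * Z⁻¹.det = (C + ZD).det * ZD⁻¹.det := by
    rw [← Matrix.det_mul, ← Matrix.det_mul, h1]
  rw [Matrix.det_nonsing_inv, Matrix.det_nonsing_inv] at hd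
  simp only [Ring.inverse_eq_inv'] at hd
  rw [div_eq_mul_inv, div_eq_mul_inv, hd]
end

section
/- Let S, C, Λ₂ be Hermitian n×n complex matrices with 0 ⪯ C ⪯ S, Λ₂ ⪰ 0, let Z_R and Z be Hermitian positive definite matrices satisfying (C + Z)⁻¹ = (C + Z_R)⁻¹ + Λ₂ and (S − C)Λ₂ = 0. Then (S + Z)(C + Z)⁻¹ = (S + Z_R)(C + Z_R)⁻¹, and consequently det(C + Z)/det(C + Z_R) = det(S + Z)/det(S + Z_R). -/
open Matrix ComplexOrder

theorem enhanced_noise_det_ratio_upper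
    {n : ℕ} (S C Λ₂ ZR Z : Matrix (Fin n) (Fin n) ℂ)
    (hC : C.PosSemidef) (hCS : (S - C).PosSemidef) (hS : S.IsHermitian)
    (hΛ₂ : Λ₂.PosSemidef) (hZR : ZR.PosDef) (hZ : Z.PosDef)
    (hKKT : (C + Z)⁻¹ = (C + ZR)⁻¹ + Λ₂)
    (hCS2 : (S - C) * Λ₂ = 0) :
    (S + Z) * (C + Z)⁻¹ = (S + ZR) * (C + ZR)⁻¹ ∧
      (C + Z).det / (C + ZR).det = (S + Z).det / (S + ZR).det := by
  have hCZ : (C + Z).PosDef := Matrix.PosDef.posSemidef_add hC hZ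
  have hCZR : (C + ZR).PosDef := Matrix.PosDef.posSemidef_add hC hZR
  have hSZ : (S + Z).PosDef := by
    have : ((S - C) + (C + Z)).PosDef := Matrix.PosDef.posSemidef_add hCS hCZ
    rwa [show S - C + (C + Z) = S + Z by abel] at this
  have hSZR : (S + ZR).PosDef := by
    have : ((S - C) + (C + ZR)).PosDef := Matrix.PosDef.posSemidef_add hCS hCZR
    rwa [show S - C + (C + ZR) = S + ZR by abel] at this
  have hdCZ : (C + Z).det ≠ 0 := hCZ.det_pos.ne'
  have hdCZR : (C + ZR).det ≠ 0 := hCZR.det_pos.ne'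
  have hdSZR : (S + ZR).det ≠ 0 := hSZR.det_pos.ne'
  have hinvZ : (C + Z) * (C + Z)⁻¹ = 1 := mul_nonsing_inv _ (isUnit_iff_ne_zero.2 hdCZ)
  have hinvZR : (C + ZR) * (C + ZR)⁻¹ = 1 := mul_nonsing_inv _ (isUnit_iff_ne_zero.2 hdCZR)
  have h1 : (S + Z) * (C + Z)⁻¹ = (S + ZR) * (C + ZR)⁻¹ := by
    have e1 : (S + Z) * (C + Z)⁻¹ = (S - C) * (C + Z)⁻¹ + 1 := by
      have : S + Z = (S - C) + (C + Z) := by abel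
      rw [this, add_mul, hinvZ]
    have e2 : (S + ZR) * (C + ZR)⁻¹ = (S - C) * (C + ZR)⁻¹ + 1 := by
      have : S + ZR = (S - C) + (C + ZR) := by abel
      rw [this, add_mul, hinvZR]
    rw [e1, e2, hKKT, mul_add, hCS2, add_zero]
  refine ⟨h1, ?_⟩
  have hdet : (S + Z).det * (C + Z).det⁻¹ = (S + ZR).det * (C + ZR).det⁻¹ := by
    have := congrArg Matrix.det h1
    simpa [det_mul, det_nonsing_inv, Ring.inverse_eq_inv'] using this
  field_simp at hdet
  rw [div_eq_div_iff hdCZR hdSZR]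
  linear_combination -hdet
end

section
/- Let S, C be Hermitian positive semidefinite n×n matrices with C ⪯ S, let Z_R, Z_D be Hermitian positive definite, and let Λ₁, Λ₂ ⪰ 0 be Hermitian satisfying: (C + Z_D)⁻¹ + Λ₁ = (C + Z_R)⁻¹ + Λ₂, CΛ₁ = 0, and (S − C)Λ₂ = 0. Define Z = (Z_D⁻¹ + Λ₁)⁻¹. Then log det(C + Z_D) − log det(C + Z_R) = log det(S + Z) − log det(Z) − log det(S + Z_R) + log det(Z_D). -/
open Matrix ComplexOrder

theorem kkt_logdet_characterization
    {n : ℕ} (S C ZR ZD Λ₁ Λ₂ : Matrix (Fin n) (Fin n) ℂ)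
    (hS : S.PosSemidef) (hC : C.PosSemidef) (hCS : (S - C).PosSemidef)
    (hZR : ZR.PosDef) (hZD : ZD.PosDef)
    (hΛ₁ : Λ₁.PosSemidef) (hΛ₂ : Λ₂.PosSemidef)
    (hStat : (C + ZD)⁻¹ + Λ₁ = (C + ZR)⁻¹ + Λ₂)
    (hCS1 : C * Λ₁ = 0) (hCS2 : (S - C) * Λ₂ = 0)
    (Z : Matrix (Fin n) (Fin n) ℂ) (hZ : Z = (ZD⁻¹ + Λ₁)⁻¹) :
    Real.log (C + ZD).det.re - Real.log (C + ZR).det.re =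
      Real.log (S + Z).det.re - Real.log Z.det.re
        - Real.log (S + ZR).det.re + Real.log ZD.det.re := by
  -- positive definiteness facts
  have hWpd : (ZD⁻¹ + Λ₁).PosDef := hZD.inv.add_posSemidef hΛ₁
  have hZpd : Z.PosDef := hZ ▸ hWpd.inv
  have hCZD : (C + ZD).PosDef := Matrix.PosDef.posSemidef_add hC hZD
  have hCZR : (C + ZR).PosDef := Matrix.PosDef.posSemidef_add hC hZR
  have hSZR : (S + ZR).PosDef := Matrix.PosDef.posSemidef_add hS hZR
  have hCZ : (C + Z).PosDef := Matrix.PosDef.posSemidef_add hC hZpd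
  have hSZ : (S + Z).PosDef := Matrix.PosDef.posSemidef_add hS hZpd
  -- determinants are units
  have hZDdet : IsUnit ZD.det := hZD.det_pos.ne'.isUnit
  have hWdet : IsUnit (ZD⁻¹ + Λ₁).det := hWpd.det_pos.ne'.isUnit
  have hCZDdet : IsUnit (C + ZD).det := hCZD.det_pos.ne'.isUnit
  have hCZRdet : IsUnit (C + ZR).det := hCZR.det_pos.ne'.isUnit
  -- Λ₁ * C = 0
  have hΛ₁C : Λ₁ * C = 0 := by
    have h := congrArg conjTranspose hCS1
    rwa [conjTranspose_mul, hΛ₁.isHermitian.eq, hC.isHermitian.eq, conjTranspose_zero] at h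
  have hZW : Z * (ZD⁻¹ + Λ₁) = 1 := by rw [hZ]; exact Matrix.nonsing_inv_mul _ hWdet
  have hWZ : (ZD⁻¹ + Λ₁) * Z = 1 := by rw [hZ]; exact Matrix.mul_nonsing_inv _ hWdet
  -- key identity A
  have hA : (C + Z) * (ZD⁻¹ + Λ₁) = (C + ZD) * ZD⁻¹ := by
    rw [add_mul, hZW, mul_add, hCS1, add_zero, add_mul,
      Matrix.mul_nonsing_inv _ hZDdet]
  set K := (C + ZD)⁻¹ + Λ₁ with hK
  -- K is a left inverse of C + Z
  have e : K * (C + Z) * (ZD⁻¹ + Λ₁) = ZD⁻¹ + Λ₁ := by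
    rw [mul_assoc, hA, ← mul_assoc, hK, add_mul, Matrix.nonsing_inv_mul _ hCZDdet,
      mul_add, hΛ₁C, zero_add, add_mul, one_mul, mul_assoc,
      Matrix.mul_nonsing_inv _ hZDdet, mul_one]
  have hLeft : K * (C + Z) = 1 := by
    have h2 : K * (C + Z) * ((ZD⁻¹ + Λ₁) * Z) = (ZD⁻¹ + Λ₁) * Z := by
      rw [← mul_assoc, e]
    rwa [hWZ, mul_one] at h2
  have hK' : K = (C + ZR)⁻¹ + Λ₂ := hStat
  -- key identity B
  have hB : (S + Z) * K = (S + ZR) * (C + ZR)⁻¹ := by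
    have hSC : S + Z = (S - C) + (C + Z) := by abel
    have hSR : S + ZR = (S - C) + (C + ZR) := by abel
    have hRight : (C + Z) * K = 1 := mul_eq_one_comm.mp hLeft
    rw [hSC, add_mul, hRight, hK', mul_add, hCS2, add_zero, hSR, add_mul,
      Matrix.mul_nonsing_inv _ hCZRdet]
  -- determinant equations
  have d1 : (C + Z).det * (ZD⁻¹ + Λ₁).det = (C + ZD).det * (ZD⁻¹).det := by
    rw [← det_mul, ← det_mul, hA]
  have dZW : Z.det * (ZD⁻¹ + Λ₁).det = 1 := by rw [← det_mul, hZW, det_one]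
  have dZD : ZD.det * (ZD⁻¹).det = 1 := by
    rw [← det_mul, Matrix.mul_nonsing_inv _ hZDdet, det_one]
  have dK : K.det * (C + Z).det = 1 := by rw [← det_mul, hLeft, det_one]
  have d2 : (S + Z).det * K.det = (S + ZR).det * ((C + ZR)⁻¹).det := by
    rw [← det_mul, ← det_mul, hB]
  have dCZR : (C + ZR).det * ((C + ZR)⁻¹).det = 1 := by
    rw [← det_mul, Matrix.mul_nonsing_inv _ hCZRdet, det_one]
  have key1 : (C + Z).det * ZD.det = (C + ZD).det * Z.det := by
    linear_combination Z.det * ZD.det * d1 - (C + Z).det * ZD.det * dZW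
      + (C + ZD).det * Z.det * dZD
  have key2 : (S + Z).det * (C + ZR).det = (S + ZR).det * (C + Z).det := by
    linear_combination (C + Z).det * (C + ZR).det * d2 - (S + Z).det * (C + ZR).det * dK
      + (S + ZR).det * (C + Z).det * dCZR
  -- real parts
  have pa := Complex.pos_iff.mp hCZD.det_pos
  have pb := Complex.pos_iff.mp hCZR.det_pos
  have ps := Complex.pos_iff.mp hSZ.det_pos
  have pz := Complex.pos_iff.mp hZpd.det_pos
  have pr := Complex.pos_iff.mp hSZR.det_pos
  have pd := Complex.pos_iff.mp hZD.det_pos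
  have pc := Complex.pos_iff.mp hCZ.det_pos
  have r1 : (C + Z).det.re * ZD.det.re = (C + ZD).det.re * Z.det.re := by
    have h := congrArg Complex.re key1
    rwa [Complex.mul_re, Complex.mul_re, ← pd.2, ← pz.2, mul_zero, mul_zero,
      sub_zero, sub_zero] at h
  have r2 : (S + Z).det.re * (C + ZR).det.re = (S + ZR).det.re * (C + Z).det.re := by
    have h := congrArg Complex.re key2
    rwa [Complex.mul_re, Complex.mul_re, ← pb.2, ← pc.2, mul_zero, mul_zero,
      sub_zero, sub_zero] at h
  have l1 : Real.log (C + Z).det.re + Real.log ZD.det.re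
      = Real.log (C + ZD).det.re + Real.log Z.det.re := by
    rw [← Real.log_mul pc.1.ne' pd.1.ne', ← Real.log_mul pa.1.ne' pz.1.ne', r1]
  have l2 : Real.log (S + Z).det.re + Real.log (C + ZR).det.re
      = Real.log (S + ZR).det.re + Real.log (C + Z).det.re := by
    rw [← Real.log_mul ps.1.ne' pb.1.ne', ← Real.log_mul pr.1.ne' pc.1.ne', r2]
  linarith
end

section
/- Let S be Hermitian positive semidefinite and let Z, Z' be Hermitian positive definite n×n matrices with Z ⪯ Z'. Then log(det(S + Z)/det(Z)) ≥ log(det(S + Z')/det(Z')). -/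
open Matrix ComplexOrder

section SqrtCompat

open scoped MatrixOrder

/-- Square root of a PSD matrix (compatibility wrapper around `CFC.sqrt`). -/
noncomputable def Matrix.PosSemidef.sqrt {n : ℕ} {A : Matrix (Fin n) (Fin n) ℂ}
    (_hA : A.PosSemidef) : Matrix (Fin n) (Fin n) ℂ := CFC.sqrt A

lemma Matrix.PosSemidef.posSemidef_sqrt {n : ℕ} {A : Matrix (Fin n) (Fin n) ℂ}
    (hA : A.PosSemidef) : hA.sqrt.PosSemidef :=
  Matrix.nonneg_iff_posSemidef.mp (CFC.sqrt_nonneg A)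

lemma Matrix.PosSemidef.sqrt_mul_self {n : ℕ} {A : Matrix (Fin n) (Fin n) ℂ}
    (hA : A.PosSemidef) : hA.sqrt * hA.sqrt = A :=
  CFC.sqrt_mul_sqrt_self A (Matrix.nonneg_iff_posSemidef.mpr hA)

end SqrtCompat

section Aux

variable {n : ℕ}

/-- For a PSD matrix `M`, `1 ≤ det (1 + M)` in the complex order. -/
lemma aux_one_le_det_one_add {M : Matrix (Fin n) (Fin n) ℂ}
    (hM : M.PosSemidef) : (1 : ℂ) ≤ (1 + M).det := by
  have hH := hM.1
  have hspec := hH.spectral_theorem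
  rw [Unitary.conjStarAlgAut_apply] at hspec
  set U : Matrix (Fin n) (Fin n) ℂ := (hH.eigenvectorUnitary : Matrix (Fin n) (Fin n) ℂ)
  have hU : U * star U = 1 := (Matrix.mem_unitaryGroup_iff).mp hH.eigenvectorUnitary.2
  set D1 : Matrix (Fin n) (Fin n) ℂ := 1 + diagonal (RCLike.ofReal ∘ hH.eigenvalues) with hD1
  have key : 1 + M = U * D1 * star U := by
    rw [hD1, Matrix.mul_add, Matrix.add_mul, Matrix.mul_one, hU, ← hspec]
  have hdet : (1 + M).det = D1.det := by
    rw [key, Matrix.det_mul, Matrix.det_mul]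
    have : U.det * D1.det * (star U).det = D1.det * (U * star U).det := by
      rw [Matrix.det_mul]; ring
    rw [this, hU, Matrix.det_one, mul_one]
  have hdiag : D1 = diagonal (fun i => (1 : ℂ) + (hH.eigenvalues i : ℂ)) := by
    rw [hD1, ← Matrix.diagonal_one, Matrix.diagonal_add]
    rfl
  rw [hdet, hdiag, Matrix.det_diagonal]
  have hreal : (∏ i, ((1 : ℂ) + (hH.eigenvalues i : ℂ)))
      = ((∏ i, ((1 : ℝ) + hH.eigenvalues i) : ℝ) : ℂ) := by
    push_cast
    rfl
  rw [hreal]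
  have h1 : (1 : ℝ) ≤ ∏ i, ((1 : ℝ) + hH.eigenvalues i) := by
    have := Finset.prod_le_prod (s := Finset.univ) (f := fun _ : Fin n => (1 : ℝ))
      (g := fun i => (1 : ℝ) + hH.eigenvalues i)
      (fun i _ => by norm_num)
      (fun i _ => by have h := hM.eigenvalues_nonneg i; show (1 : ℝ) ≤ 1 + hH.eigenvalues i; linarith)
    simpa using this
  calc (1 : ℂ) = ((1 : ℝ) : ℂ) := by norm_num
    _ ≤ ((∏ i, ((1 : ℝ) + hH.eigenvalues i) : ℝ) : ℂ) := by
        rw [Complex.real_le_real]; exact h1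

/-- Determinant is monotone w.r.t. the Loewner order on positive definite matrices. -/
lemma aux_det_mono {A B : Matrix (Fin n) (Fin n) ℂ}
    (hA : A.PosDef) (hBA : (B - A).PosSemidef) : A.det ≤ B.det := by
  set W := hA.posSemidef.sqrt with hWdef
  have hW : W.PosSemidef := hA.posSemidef.posSemidef_sqrt
  have hWW : W * W = A := hA.posSemidef.sqrt_mul_self
  have hdetW : IsUnit W.det := by
    have : W.det * W.det = A.det := by rw [← Matrix.det_mul, hWW]
    have hAd : A.det ≠ 0 := ne_of_gt hA.det_pos
    exact isUnit_iff_ne_zero.mpr (fun h => hAd (by rw [← this, h, mul_zero]))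
  have hWinv : W * W⁻¹ = 1 := Matrix.mul_nonsing_inv W hdetW
  have hWinvH : (W⁻¹).IsHermitian := hW.isHermitian.inv
  set D := B - A with hD
  set E := W⁻¹ * D * W⁻¹ with hE
  have hEpsd : E.PosSemidef := by
    have := hBA.conjTranspose_mul_mul_same (B := W⁻¹)
    rwa [hWinvH.eq] at this
  have hBeq : B = W * (1 + E) * W := by
    rw [hE]
    have : W * (1 + W⁻¹ * D * W⁻¹) * W = W * W + W * (W⁻¹ * D * W⁻¹) * W := by
      rw [Matrix.mul_add, Matrix.add_mul, Matrix.mul_one]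
    rw [this, hWW]
    have h2 : W * (W⁻¹ * D * W⁻¹) * W = (W * W⁻¹) * D * (W⁻¹ * W) := by
      simp only [Matrix.mul_assoc]
    have hWinv' : W⁻¹ * W = 1 := Matrix.nonsing_inv_mul W hdetW
    rw [h2, hWinv, hWinv', Matrix.one_mul, Matrix.mul_one]
    rw [hD]; abel
  have hdetB : B.det = A.det * (1 + E).det := by
    rw [hBeq, Matrix.det_mul, Matrix.det_mul, mul_comm W.det, mul_assoc, ← Matrix.det_mul, hWW,
      mul_comm]
  rw [hdetB]
  calc A.det = A.det * 1 := (mul_one _).symm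
    _ ≤ A.det * (1 + E).det :=
        mul_le_mul_of_nonneg_left (aux_one_le_det_one_add hEpsd) hA.det_pos.le

/-- Inverse is antitone w.r.t. the Loewner order. -/
lemma aux_inv_antitone {Z Z' : Matrix (Fin n) (Fin n) ℂ}
    (hZ : Z.PosDef) (hZ' : Z'.PosDef) (hle : (Z' - Z).PosSemidef) :
    (Z⁻¹ - Z'⁻¹).PosSemidef := by
  set E := hle.sqrt with hEdef
  have hEpsd : (Matrix.PosSemidef.sqrt hle).PosSemidef := hle.posSemidef_sqrt
  have hEH : E.IsHermitian := hEpsd.isHermitian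
  have hEE : E * E = Z' - Z := hle.sqrt_mul_self
  have hZinv : Z⁻¹.PosDef := hZ.inv
  set K := (1 : Matrix (Fin n) (Fin n) ℂ) + E * Z⁻¹ * E with hK
  have hKpd : K.PosDef := by
    apply Matrix.PosDef.add_posSemidef Matrix.PosDef.one
    have := hZinv.posSemidef.conjTranspose_mul_mul_same (B := E)
    rwa [hEH.eq] at this
  have hZ'eq : Z' = Z + E * 1 * E := by
    rw [Matrix.mul_one, hEE]; abel
  have hwood : Z'⁻¹ = Z⁻¹ - Z⁻¹ * E * ((1 : Matrix (Fin n) (Fin n) ℂ)⁻¹ + E * Z⁻¹ * E)⁻¹ * E * Z⁻¹ := by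
    rw [hZ'eq]
    exact Matrix.add_mul_mul_inv_eq_sub Z E 1 E hZ.isUnit isUnit_one
      (by rw [inv_one]; exact hKpd.isUnit)
  have hdiff : Z⁻¹ - Z'⁻¹ = (E * Z⁻¹)ᴴ * K⁻¹ * (E * Z⁻¹) := by
    rw [hwood, inv_one, ← hK]
    have : (E * Z⁻¹)ᴴ = Z⁻¹ * E := by
      rw [Matrix.conjTranspose_mul, hEH.eq, hZinv.isHermitian.eq]
    rw [this, sub_sub_cancel]
    simp only [Matrix.mul_assoc]
  rw [hdiff]
  exact (hKpd.posSemidef.inv).conjTranspose_mul_mul_same (B := E * Z⁻¹)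

/-- det(S+Z) = det Z * det(1 + T Z⁻¹ T) where T = √S. -/
lemma aux_det_split {S Z : Matrix (Fin n) (Fin n) ℂ}
    (hS : S.PosSemidef) (hZ : Z.PosDef) :
    (S + Z).det = Z.det * (1 + hS.sqrt * Z⁻¹ * hS.sqrt).det := by
  set T := hS.sqrt with hT
  have hTT : T * T = S := hS.sqrt_mul_self
  have hdetZ : IsUnit Z.det := isUnit_iff_ne_zero.mpr (ne_of_gt hZ.det_pos)
  have hZinv : Z * Z⁻¹ = 1 := Matrix.mul_nonsing_inv Z hdetZ
  have h1 : S + Z = Z * (1 + Z⁻¹ * (T * T)) := by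
    rw [Matrix.mul_add, Matrix.mul_one, ← Matrix.mul_assoc, ← Matrix.mul_assoc, hZinv,
      Matrix.one_mul, hTT]
    abel
  rw [h1, Matrix.det_mul]
  congr 1
  have h2 : (1 : Matrix (Fin n) (Fin n) ℂ) + Z⁻¹ * (T * T) = 1 + (Z⁻¹ * T) * T := by
    rw [Matrix.mul_assoc]
  rw [h2, add_comm (1 : Matrix (Fin n) (Fin n) ℂ) ((Z⁻¹ * T) * T),
    Matrix.det_mul_add_one_comm, ← Matrix.mul_assoc, add_comm]

end Aux

theorem rate_monotone_in_noise
    {n : ℕ} (S Z Z' : Matrix (Fin n) (Fin n) ℂ)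
    (hS : S.PosSemidef) (hZ : Z.PosDef) (hZ' : Z'.PosDef)
    (hle : (Z' - Z).PosSemidef) :
    Real.log ((S + Z).det.re / Z.det.re) ≥
      Real.log ((S + Z').det.re / Z'.det.re) := by
  set T := hS.sqrt with hTdef
  have hTH : T.IsHermitian := hS.posSemidef_sqrt.isHermitian
  set M := T * Z⁻¹ * T with hM
  set M' := T * Z'⁻¹ * T with hM'
  have hM'psd : M'.PosSemidef := by
    have := hZ'.inv.posSemidef.conjTranspose_mul_mul_same (B := T)
    rwa [hTH.eq] at this
  have hdiffpsd : (M - M').PosSemidef := by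
    have h := (aux_inv_antitone hZ hZ' hle).conjTranspose_mul_mul_same (B := T)
    rw [hTH.eq] at h
    have : T * (Z⁻¹ - Z'⁻¹) * T = M - M' := by
      rw [hM, hM', Matrix.mul_sub, Matrix.sub_mul]
    rwa [this] at h
  have hApd : ((1 : Matrix (Fin n) (Fin n) ℂ) + M').PosDef :=
    Matrix.PosDef.add_posSemidef Matrix.PosDef.one hM'psd
  have hdetle : ((1 : Matrix (Fin n) (Fin n) ℂ) + M').det
      ≤ ((1 : Matrix (Fin n) (Fin n) ℂ) + M).det := by
    apply aux_det_mono hApd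
    have : (1 : Matrix (Fin n) (Fin n) ℂ) + M - (1 + M') = M - M' := by abel
    rwa [this]
  have hdZ : (S + Z).det = Z.det * ((1 : Matrix (Fin n) (Fin n) ℂ) + M).det :=
    aux_det_split hS hZ
  have hdZ' : (S + Z').det = Z'.det * ((1 : Matrix (Fin n) (Fin n) ℂ) + M').det :=
    aux_det_split hS hZ'
  -- complex inequality
  have hprod : (S + Z').det * Z.det ≤ (S + Z).det * Z'.det := by
    rw [hdZ, hdZ']
    have h0 : (0 : ℂ) ≤ Z.det * Z'.det := (mul_pos hZ.det_pos hZ'.det_pos).le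
    calc Z'.det * ((1 : Matrix (Fin n) (Fin n) ℂ) + M').det * Z.det
        = Z.det * Z'.det * ((1 : Matrix (Fin n) (Fin n) ℂ) + M').det := by ring
      _ ≤ Z.det * Z'.det * ((1 : Matrix (Fin n) (Fin n) ℂ) + M).det :=
          mul_le_mul_of_nonneg_left hdetle h0
      _ = Z.det * ((1 : Matrix (Fin n) (Fin n) ℂ) + M).det * Z'.det := by ring
  -- positivity facts
  have hSZ : (S + Z).det > 0 := (Matrix.PosDef.posSemidef_add hS hZ).det_pos
  have hSZ' : (S + Z').det > 0 := (Matrix.PosDef.posSemidef_add hS hZ').det_pos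
  obtain ⟨hre1, him1⟩ := Complex.lt_def.mp hSZ
  obtain ⟨hre2, him2⟩ := Complex.lt_def.mp hSZ'
  obtain ⟨hre3, him3⟩ := Complex.lt_def.mp hZ.det_pos
  obtain ⟨hre4, him4⟩ := Complex.lt_def.mp hZ'.det_pos
  simp only [Complex.zero_re, Complex.zero_im] at hre1 him1 hre2 him2 hre3 him3 hre4 him4
  have hprodre : (S + Z').det.re * Z.det.re ≤ (S + Z).det.re * Z'.det.re := by
    have h := (Complex.le_def.mp hprod).1
    rwa [Complex.mul_re, Complex.mul_re, ← him2, ← him1, ← him3, ← him4,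
      mul_zero, sub_zero, sub_zero] at h
  have hdivpos : 0 < (S + Z').det.re / Z'.det.re := div_pos hre2 hre4
  apply Real.log_le_log hdivpos
  rw [div_le_div_iff₀ hre4 hre3]
  exact hprodre
end
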